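/- arXiv:2407.13360 — 2 statements merged into one kernel-verified Lean document; each statement's English description precedes it below -/
import Mathlib

section
/- The function x ↦ Q(−G√x) is monotonically increasing and concave on x ≥ 0 for any constant G > 0, where Q is the standard Gaussian tail function. -/
open MeasureTheory

/-- The standard Gaussian tail function `Q(x) = (1/√(2π)) ∫ₓ^∞ e^{−t²/2} dt`. -/
noncomputable def gaussianQ (x : ℝ) : ℝ :=
  (Real.sqrt (2 * Real.pi))⁻¹ * ∫ t in Set.Ioi x, Real.exp (-t ^ 2 / 2)

namespace QAux

noncomputable def g (t : ℝ) : ℝ := Real.exp (-t ^ 2 / 2)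

lemma g_cont : Continuous g := by
  unfold g; continuity

lemma g_pos (t : ℝ) : 0 < g t := Real.exp_pos _

lemma g_int : Integrable g := by
  have h : g = fun t => Real.exp (-(1/2 : ℝ) * t ^ 2) := by
    funext t; unfold g; ring_nf
  rw [h]
  exact integrable_exp_neg_mul_sq (by norm_num)

noncomputable def H (x : ℝ) : ℝ := ∫ t in (0:ℝ)..x, g t

lemma H_hasDeriv (x : ℝ) : HasDerivAt H (g x) x :=
  intervalIntegral.integral_hasDerivAt_right g_int.intervalIntegrable
    (g_cont.stronglyMeasurable.stronglyMeasurableAtFilter) g_cont.continuousAt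

lemma H_cont : Continuous H :=
  continuous_iff_continuousAt.2 fun x => (H_hasDeriv x).continuousAt

noncomputable def C : ℝ := ∫ t in Set.Ioi (0:ℝ), g t

lemma Ioi_eq {a : ℝ} (ha : a ≤ 0) : ∫ t in Set.Ioi a, g t = C - H a := by
  have hsplit : Set.Ioi a = Set.Ioc a 0 ∪ Set.Ioi 0 := (Set.Ioc_union_Ioi_eq_Ioi ha).symm
  have hHa : H a = -∫ t in Set.Ioc a 0, g t := by
    rw [H, intervalIntegral.integral_symm, intervalIntegral.integral_of_le ha]
  rw [hsplit, setIntegral_union (Set.Ioc_disjoint_Ioi le_rfl) measurableSet_Ioi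
      g_int.integrableOn g_int.integrableOn, hHa, C]
  ring

end QAux

/-- `x ↦ Q(−G√x)` is monotonically increasing and concave on `x ≥ 0` for any `G > 0`. -/
theorem Q_sqrt_mono_concave (G : ℝ) (hG : 0 < G) :
    MonotoneOn (fun x : ℝ => gaussianQ (-G * Real.sqrt x)) (Set.Ici 0) ∧
    ConcaveOn ℝ (Set.Ici 0) (fun x : ℝ => gaussianQ (-G * Real.sqrt x)) := by
  open QAux in
  set c : ℝ := (Real.sqrt (2 * Real.pi))⁻¹ with hc
  have hc0 : 0 < c := by
    rw [hc]
    positivity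
  have hQ : ∀ x : ℝ, gaussianQ x = c * ∫ t in Set.Ioi x, g t := fun x => rfl
  constructor
  · intro a ha b hb hab
    simp only [hQ]
    refine mul_le_mul_of_nonneg_left ?_ hc0.le
    refine setIntegral_mono_set g_int.integrableOn
      (Filter.Eventually.of_forall fun t => (g_pos t).le) ?_
    refine Filter.Eventually.of_forall ?_
    intro t ht
    have : Real.sqrt a ≤ Real.sqrt b := Real.sqrt_le_sqrt hab
    have h2 : -G * Real.sqrt b ≤ -G * Real.sqrt a := by nlinarith
    exact lt_of_le_of_lt h2 ht
  · -- concavity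
    have hrep : ∀ x ∈ Set.Ici (0:ℝ),
        gaussianQ (-G * Real.sqrt x) = c * C - c * H (-G * Real.sqrt x) := by
      intro x hx
      have hle : -G * Real.sqrt x ≤ 0 := by
        have := Real.sqrt_nonneg x; nlinarith
      rw [hQ, Ioi_eq hle]; ring
    have hderiv : ∀ x : ℝ, 0 < x → HasDerivAt
        (fun y : ℝ => gaussianQ (-G * Real.sqrt y))
        (c * (G * g (-G * Real.sqrt x) / (2 * Real.sqrt x))) x := by
      intro x hx
      have hsx : 0 < Real.sqrt x := Real.sqrt_pos.2 hx
      have hφ : HasDerivAt (fun y : ℝ => -G * Real.sqrt y)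
          (-G * (1 / (2 * Real.sqrt x))) x :=
        (Real.hasDerivAt_sqrt hx.ne').const_mul (-G)
      have h1 : HasDerivAt (fun y : ℝ => H (-G * Real.sqrt y))
          (g (-G * Real.sqrt x) * (-G * (1 / (2 * Real.sqrt x)))) x := by
        have := (H_hasDeriv (-G * Real.sqrt x)).comp x hφ; exact this
      have hcomp := (hasDerivAt_const x (c * C)).sub (HasDerivAt.const_mul c h1)
      have heq : (fun y : ℝ => gaussianQ (-G * Real.sqrt y)) =ᶠ[nhds x]
          (fun y : ℝ => c * C - c * H (-G * Real.sqrt y)) := by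
        filter_upwards [eventually_gt_nhds hx] with y hy
        exact hrep y (le_of_lt hy)
      have hfinal := hcomp.congr_of_eventuallyEq heq
      refine hfinal.congr_deriv ?_
      ring
    have hint : interior (Set.Ici (0:ℝ)) = Set.Ioi 0 := interior_Ici
    have hderiv_eq : ∀ x ∈ Set.Ioi (0:ℝ), deriv (fun y : ℝ => gaussianQ (-G * Real.sqrt y)) x
        = c * G * Real.exp (-(G ^ 2 * x) / 2) / (2 * Real.sqrt x) := by
      intro x hx
      rw [(hderiv x hx).deriv]
      have hsq : (-G * Real.sqrt x) ^ 2 = G ^ 2 * x := by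
        rw [mul_pow, Real.sq_sqrt (le_of_lt hx)]; ring
      unfold g
      rw [hsq]
      ring
    refine AntitoneOn.concaveOn_of_deriv (convex_Ici 0) ?_ ?_ ?_
    · -- continuity
      refine ContinuousOn.congr (f := fun y : ℝ => c * C - c * H (-G * Real.sqrt y)) ?_ hrep
      exact (Continuous.sub continuous_const
        (continuous_const.mul (H_cont.comp (continuous_const.mul Real.continuous_sqrt)))).continuousOn
    · rw [hint]
      intro x hx
      exact ((hderiv x hx).differentiableAt).differentiableWithinAt
    · rw [hint]
      intro a ha b hb hab
      rw [hderiv_eq a ha, hderiv_eq b hb]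
      have hsa : 0 < Real.sqrt a := Real.sqrt_pos.2 ha
      have hsb : Real.sqrt a ≤ Real.sqrt b := Real.sqrt_le_sqrt hab
      refine div_le_div₀ (by positivity) ?_ (by positivity) (by linarith)
      refine mul_le_mul_of_nonneg_left ?_ (by positivity)
      refine Real.exp_le_exp.2 ?_
      have hG2 : 0 < G ^ 2 := by positivity
      rw [Set.mem_Ioi] at ha hb
      nlinarith
end

section
/- The function ν(D) = (σ(ψ_I(D)) − (L−1)/L)·σ(ψ_T(D)) is log-concave on [1, D_max], where ψ_I is concave, ψ_T is concave, σ is the sigmoid, and σ(ψ_I(D)) > (L−1)/L holds for all D in [1, D_max]; hence any stationary point of ν in the interior of [1, D_max] is a global maximizer. -/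
open Set
open Real hiding sigmoid sigmoid_pos

/-- The sigmoid function. -/
noncomputable def sigmoid (x : ℝ) : ℝ := 1 / (1 + Real.exp (-x))

lemma one_add_exp_pos (x : ℝ) : 0 < 1 + Real.exp (-x) := by positivity

lemma sigmoid_pos (x : ℝ) : 0 < sigmoid x := by unfold sigmoid; positivity

lemma sigmoid_mono : Monotone sigmoid := by
  intro x y hxy
  unfold sigmoid
  apply one_div_le_one_div_of_le (one_add_exp_pos y)
  have : Real.exp (-y) ≤ Real.exp (-x) := Real.exp_le_exp.2 (by linarith)
  linarith

lemma log_ratio_lt_iff {c x : ℝ} (hc0 : 0 < c) (hc1 : c < 1) :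
    Real.log (c / (1 - c)) < x ↔ Real.exp (-x) < (1 - c) / c := by
  have h1c : 0 < 1 - c := by linarith
  rw [show c / (1 - c) = ((1 - c) / c)⁻¹ by field_simp, Real.log_inv, neg_lt,
    Real.lt_log_iff_exp_lt (by positivity)]

lemma sig_gt_iff {c : ℝ} (hc0 : 0 < c) (hc1 : c < 1) (x : ℝ) :
    c < sigmoid x ↔ Real.log (c / (1 - c)) < x := by
  have he : 0 < Real.exp (-x) := Real.exp_pos _
  have h1 : 0 < 1 + Real.exp (-x) := one_add_exp_pos x
  rw [log_ratio_lt_iff hc0 hc1]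
  unfold sigmoid
  rw [lt_div_iff₀ h1, lt_div_iff₀ hc0]
  constructor <;> intro h <;> nlinarith

lemma inner_pos_iff {c : ℝ} (hc0 : 0 < c) (hc1 : c < 1) (x : ℝ) :
    0 < 1 - c - c * Real.exp (-x) ↔ Real.log (c / (1 - c)) < x := by
  rw [log_ratio_lt_iff hc0 hc1, lt_div_iff₀ hc0]
  constructor <;> intro h <;> nlinarith

lemma concaveOn_congr' {s : Set ℝ} {f g : ℝ → ℝ} (hf : ConcaveOn ℝ s f)
    (h : ∀ x ∈ s, f x = g x) : ConcaveOn ℝ s g := by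
  refine ⟨hf.1, fun x hx y hy a b ha hb hab => ?_⟩
  rw [← h _ hx, ← h _ hy, ← h _ (hf.1 hx hy ha hb hab)]
  exact hf.2 hx hy ha hb hab

lemma concaveOn_comp' {s t : Set ℝ} {g ψ : ℝ → ℝ} (hg : ConcaveOn ℝ t g)
    (hmono : MonotoneOn g t) (hψ : ConcaveOn ℝ s ψ) (hmem : ∀ x ∈ s, ψ x ∈ t) :
    ConcaveOn ℝ s (fun x => g (ψ x)) := by
  refine ⟨hψ.1, fun x hx y hy a b ha hb hab => ?_⟩
  have hmem' : a • ψ x + b • ψ y ∈ t := hg.1 (hmem x hx) (hmem y hy) ha hb hab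
  calc a • g (ψ x) + b • g (ψ y) ≤ g (a • ψ x + b • ψ y) :=
        hg.2 (hmem x hx) (hmem y hy) ha hb hab
    _ ≤ g (ψ (a • x + b • y)) :=
        hmono hmem' (hmem _ (hψ.1 hx hy ha hb hab)) (hψ.2 hx hy ha hb hab)

lemma B_concaveOn : ConcaveOn ℝ (Set.univ : Set ℝ) (fun x => -Real.log (1 + Real.exp (-x))) := by
  have hd1 : ∀ x : ℝ, HasDerivAt (fun x => -Real.log (1 + Real.exp (-x)))
      (Real.exp (-x) / (1 + Real.exp (-x))) x := by
    intro x
    have h1 : HasDerivAt (fun x : ℝ => Real.exp (-x)) (Real.exp (-x) * (-1)) x :=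
      ((hasDerivAt_id x).neg).exp
    have h2 : HasDerivAt (fun x : ℝ => 1 + Real.exp (-x)) (Real.exp (-x) * (-1)) x :=
      h1.const_add 1
    have h3 := (h2.log (one_add_exp_pos x).ne').neg
    exact h3.congr_deriv (by ring)
  have hd2 : ∀ x : ℝ, HasDerivAt (fun x => Real.exp (-x) / (1 + Real.exp (-x)))
      (-Real.exp (-x) / (1 + Real.exp (-x)) ^ 2) x := by
    intro x
    have h1 : HasDerivAt (fun x : ℝ => Real.exp (-x)) (Real.exp (-x) * (-1)) x :=
      ((hasDerivAt_id x).neg).exp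
    have h2 : HasDerivAt (fun x : ℝ => 1 + Real.exp (-x)) (Real.exp (-x) * (-1)) x :=
      h1.const_add 1
    have h3 := h1.div h2 (one_add_exp_pos x).ne'
    have hne : ((1 : ℝ) + Real.exp (-x)) ^ 2 ≠ 0 := by positivity
    exact h3.congr_deriv (by ring)
  apply concaveOn_of_hasDerivWithinAt2_nonpos convex_univ
  · exact (fun x => ((hd1 x).differentiableAt : DifferentiableAt ℝ _ x)) |>
      Differentiable.continuous |>.continuousOn
  · exact fun x _ => (hd1 x).hasDerivWithinAt
  · exact fun x _ => (hd2 x).hasDerivWithinAt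
  · intro x _
    apply div_nonpos_of_nonpos_of_nonneg
    · simp [Real.exp_pos (-x) |>.le]
    · positivity

lemma inner_concaveOn {c : ℝ} (hc : 0 ≤ c) :
    ConcaveOn ℝ (Set.univ : Set ℝ) (fun x => (1 - c) - c * Real.exp (-x)) := by
  refine ⟨convex_univ, fun x _ y _ a b ha hb hab => ?_⟩
  have hcv := convexOn_exp.2 (Set.mem_univ (-x)) (Set.mem_univ (-y)) ha hb hab
  simp only [smul_eq_mul] at hcv ⊢
  have h2 : Real.exp (-(a * x + b * y)) ≤ a * Real.exp (-x) + b * Real.exp (-y) := by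
    rw [show -(a * x + b * y) = a * (-x) + b * (-y) by ring]
    exact hcv
  nlinarith [mul_le_mul_of_nonneg_left h2 hc]

/-- `ν(D) = (σ(ψ_I(D)) − (L−1)/L)·σ(ψ_T(D))` is log-concave on `[1, D_max]` when
`ψ_I, ψ_T` are concave and `σ(ψ_I(D)) > (L−1)/L` there; hence any interior
stationary point of `ν` is a global maximizer on `[1, D_max]`. -/
theorem nu_logconcave_stationary_max (L : ℕ) (hL : 2 ≤ L) (Dmax : ℝ) (hD : 1 < Dmax)
    (ψI ψT : ℝ → ℝ) (hψI : ConcaveOn ℝ (Set.Icc 1 Dmax) ψI)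
    (hψT : ConcaveOn ℝ (Set.Icc 1 Dmax) ψT)
    (hgt : ∀ D ∈ Set.Icc (1 : ℝ) Dmax, ((L : ℝ) - 1) / L < sigmoid (ψI D)) :
    let ν : ℝ → ℝ := fun D => (sigmoid (ψI D) - ((L : ℝ) - 1) / L) * sigmoid (ψT D)
    ConcaveOn ℝ (Set.Icc 1 Dmax) (fun D => Real.log (ν D)) ∧
    ∀ D₀ ∈ Set.Ioo (1 : ℝ) Dmax, DifferentiableAt ℝ ν D₀ → deriv ν D₀ = 0 →
      ∀ D ∈ Set.Icc (1 : ℝ) Dmax, ν D ≤ ν D₀ := by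
  intro ν
  have hL2 : (2 : ℝ) ≤ (L : ℝ) := by exact_mod_cast hL
  set c : ℝ := ((L : ℝ) - 1) / L with hc_def
  have hLpos : (0 : ℝ) < L := by linarith
  have hc0 : 0 < c := div_pos (by linarith) hLpos
  have hc1 : c < 1 := by rw [hc_def, div_lt_one hLpos]; linarith
  set t : ℝ := Real.log (c / (1 - c)) with ht_def
  have hpos1 : ∀ D ∈ Set.Icc (1 : ℝ) Dmax, 0 < sigmoid (ψI D) - c :=
    fun D hD' => sub_pos.2 (hgt D hD')
  -- concavity of log (sigmoid x - c) on Ioi t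
  have hlog_conc : ConcaveOn ℝ (Set.Ioi (0 : ℝ)) Real.log := strictConcaveOn_log_Ioi.concaveOn
  have hlog_mono : MonotoneOn Real.log (Set.Ioi (0 : ℝ)) :=
    fun a ha b _ hab => Real.log_le_log ha hab
  have hA : ConcaveOn ℝ (Set.Ioi t) (fun x => Real.log ((1 - c) - c * Real.exp (-x))) := by
    apply concaveOn_comp' hlog_conc hlog_mono
      ((inner_concaveOn hc0.le).subset (Set.subset_univ _) (convex_Ioi t))
    intro x hx
    have := (inner_pos_iff hc0 hc1 x).2 hx
    simpa using this
  have hBt : ConcaveOn ℝ (Set.Ioi t) (fun x => -Real.log (1 + Real.exp (-x))) :=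
    B_concaveOn.subset (Set.subset_univ _) (convex_Ioi t)
  have hgc_eq : ∀ x ∈ Set.Ioi t,
      Real.log ((1 - c) - c * Real.exp (-x)) + -Real.log (1 + Real.exp (-x)) =
        Real.log (sigmoid x - c) := by
    intro x hx
    have hnum : 0 < 1 - c - c * Real.exp (-x) := (inner_pos_iff hc0 hc1 x).2 hx
    have hden := one_add_exp_pos x
    have hs : sigmoid x - c = (1 - c - c * Real.exp (-x)) / (1 + Real.exp (-x)) := by
      unfold sigmoid
      field_simp
      ring
    rw [hs, Real.log_div hnum.ne' hden.ne']
    ring_nf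
  have hgc : ConcaveOn ℝ (Set.Ioi t) (fun x => Real.log (sigmoid x - c)) := by
    refine concaveOn_congr' (hA.add hBt) (fun x hx => ?_)
    simpa using hgc_eq x hx
  have hgc_mono : MonotoneOn (fun x => Real.log (sigmoid x - c)) (Set.Ioi t) := by
    intro x hx y _ hxy
    have hx' : 0 < sigmoid x - c := sub_pos.2 ((sig_gt_iff hc0 hc1 x).2 hx)
    exact Real.log_le_log hx' (sub_le_sub_right (sigmoid_mono hxy) c)
  have hg0 : ConcaveOn ℝ (Set.univ : Set ℝ) (fun x => Real.log (sigmoid x)) := by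
    refine concaveOn_congr' B_concaveOn (fun x _ => ?_)
    unfold sigmoid
    rw [one_div, Real.log_inv]
  have hg0_mono : MonotoneOn (fun x => Real.log (sigmoid x)) (Set.univ : Set ℝ) :=
    fun x _ y _ hxy => Real.log_le_log (sigmoid_pos x) (sigmoid_mono hxy)
  have hcomp1 : ConcaveOn ℝ (Set.Icc 1 Dmax) (fun D => Real.log (sigmoid (ψI D) - c)) :=
    concaveOn_comp' (ψ := ψI) hgc hgc_mono hψI (fun D hD' => (sig_gt_iff hc0 hc1 _).1 (hgt D hD'))
  have hcomp2 : ConcaveOn ℝ (Set.Icc 1 Dmax) (fun D => Real.log (sigmoid (ψT D))) :=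
    concaveOn_comp' (ψ := ψT) hg0 hg0_mono hψT (fun D _ => Set.mem_univ _)
  have hν_pos : ∀ D ∈ Set.Icc (1 : ℝ) Dmax, 0 < ν D :=
    fun D hD' => mul_pos (hpos1 D hD') (sigmoid_pos _)
  have hlog : ConcaveOn ℝ (Set.Icc 1 Dmax) (fun D => Real.log (ν D)) := by
    refine concaveOn_congr' (hcomp1.add hcomp2) (fun D hD' => ?_)
    simp only [Pi.add_apply]
    rw [← Real.log_mul (hpos1 D hD').ne' (sigmoid_pos _).ne']
  refine ⟨hlog, ?_⟩
  intro D₀ hD₀ hdiff hderiv D hD'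
  have hD₀' : D₀ ∈ Set.Icc (1 : ℝ) Dmax := Set.Ioo_subset_Icc_self hD₀
  have hν₀ : 0 < ν D₀ := hν_pos D₀ hD₀'
  have hg : HasDerivAt (fun D => Real.log (ν D)) 0 D₀ := by
    have := (hdiff.hasDerivAt).log hν₀.ne'
    rwa [hderiv, zero_div] at this
  have key : Real.log (ν D) ≤ Real.log (ν D₀) := by
    rcases lt_trichotomy D D₀ with h | h | h
    · have hsl := hlog.le_slope_of_hasDerivAt hD' hD₀' h hg
      rw [slope_def_field] at hsl
      rw [le_div_iff₀ (by linarith : (0:ℝ) < D₀ - D)] at hsl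
      linarith
    · rw [h]
    · have hsl := hlog.slope_le_of_hasDerivAt hD₀' hD' h hg
      rw [slope_def_field] at hsl
      rw [div_le_iff₀ (by linarith : (0:ℝ) < D - D₀)] at hsl
      linarith
  have hfin := Real.exp_le_exp.2 key
  rwa [Real.exp_log (hν_pos D hD'), Real.exp_log hν₀] at hfin
end
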